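/- Generalized Singleton bound: For an [n,k] non-degenerate linear rank metric code C over F_{q^m} and 1 ≤ r ≤ k, the r-th generalized rank weight satisfies d_r(C) ≤ n − k + r. -/

import Mathlib

open Matrix

/-- The `r`-th generalized rank weight (minimum q-support dimension of `r`-dim subcodes). -/
noncomputable def genRankWeight (Fq : Type*) {Fqm : Type*} [Field Fq] [Field Fqm]
    [Algebra Fq Fqm] {n : ℕ} (C : Submodule Fqm (Fin n → Fqm)) (r : ℕ) : ℕ :=
  sInf { w | ∃ b : Fin r → Fin n → Fqm, LinearIndependent Fqm b ∧
    Submodule.span Fqm (Set.range b) ≤ C ∧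
    w = Module.finrank Fq
      (Submodule.span Fq (Set.range fun j : Fin n => fun i : Fin r => b i j)) }

/-- Non-degenerate: the columns of a generator matrix are `F_q`-linearly independent;
equivalently, no nonzero `F_q`-linear combination of coordinates vanishes on all of `C`. -/
def Nondeg (Fq : Type*) {Fqm : Type*} [Field Fq] [Field Fqm] [Algebra Fq Fqm] {n : ℕ}
    (C : Submodule Fqm (Fin n → Fqm)) : Prop :=
  ∀ c : Fin n → Fq, (∀ x ∈ C, ∑ j, algebraMap Fq Fqm (c j) * x j = 0) → c = 0

set_option maxHeartbeats 1000000 in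
set_option synthInstance.maxHeartbeats 400000 in
/-- Generalized Singleton bound: for a non-degenerate `[n,k]` linear rank metric
code `C` over `F_{q^m}` and `1 ≤ r ≤ k`, `d_r(C) ≤ n − k + r`. -/
theorem genRankWeight_singleton_bound
    {Fq Fqm : Type*} [Field Fq] [Field Fqm] [Algebra Fq Fqm]
    {n k : ℕ} (C : Submodule Fqm (Fin n → Fqm))
    (hCk : Module.finrank Fqm C = k) (hnd : Nondeg Fq C)
    (r : ℕ) (hr1 : 1 ≤ r) (hrk : r ≤ k) :
    genRankWeight Fq C r ≤ n - k + r := by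
  classical
  have hkn : k ≤ n := by
    have := Submodule.finrank_le C
    simpa [hCk, Module.finrank_fintype_fun_eq_card] using this
  -- projection onto the last k - r coordinates
  set g : Fin (k - r) → Fin n := fun i => ⟨n - k + r + i.1, by omega⟩ with hg
  set f : C →ₗ[Fqm] (Fin (k - r) → Fqm) :=
    (LinearMap.funLeft Fqm Fqm g).comp C.subtype with hf
  have hker : r ≤ Module.finrank Fqm (LinearMap.ker f) := by
    have h1 := LinearMap.finrank_range_add_finrank_ker f
    have h2 : Module.finrank Fqm (LinearMap.range f) ≤ k - r := by
      have := Submodule.finrank_le (LinearMap.range f)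
      simpa [Module.finrank_fintype_fun_eq_card] using this
    rw [hCk] at h1
    omega
  -- pick r linearly independent vectors in the kernel
  obtain ⟨bb, hbbli⟩ := exists_linearIndependent_of_le_finrank hker
  let b : Fin r → Fin n → Fqm := fun i => ((bb i : C) : Fin n → Fqm)
  have hinj : Function.Injective (C.subtype.comp (LinearMap.ker f).subtype) :=
    C.injective_subtype.comp (LinearMap.ker f).injective_subtype
  have hbli : LinearIndependent Fqm b := by
    have := hbbli.map_injOn (C.subtype.comp (LinearMap.ker f).subtype)
      hinj.injOn
    exact this
  have hbC : Submodule.span Fqm (Set.range b) ≤ C := by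
    rw [Submodule.span_le]
    rintro - ⟨i, rfl⟩
    exact ((bb i : C) : C).2
  -- vanishing of the last coordinates
  have hzero : ∀ (j : Fin n), n - k + r ≤ j.1 → ∀ i, b i j = 0 := by
    intro j hj i
    have := LinearMap.mem_ker.mp (bb i).2
    have h2 := congrFun this ⟨j.1 - (n - k + r), by omega⟩
    have hgj : g ⟨j.1 - (n - k + r), by omega⟩ = j := by
      apply Fin.ext; simp [hg]; omega
    rw [show j = g ⟨j.1 - (n - k + r), by omega⟩ from hgj.symm]
    exact h2
  -- columns
  set cols : Fin n → Fin r → Fqm := fun j i => b i j with hcols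
  have hmle : n - k + r ≤ n := by omega
  set cols' : Fin (n - k + r) → Fin r → Fqm := fun j => cols (Fin.castLE hmle j)
  have hspan : Submodule.span Fq (Set.range cols) = Submodule.span Fq (Set.range cols') := by
    apply le_antisymm
    · rw [Submodule.span_le]
      rintro - ⟨j, rfl⟩
      by_cases hj : j.1 < n - k + r
      · exact Submodule.subset_span ⟨⟨j.1, hj⟩, by simp [cols']⟩
      · have : cols j = 0 := by
          funext i; exact hzero j (by omega) i
        rw [this]; exact (Submodule.span Fq _).zero_mem
    · rw [Submodule.span_le]
      rintro - ⟨j, rfl⟩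
      exact Submodule.subset_span ⟨Fin.castLE hmle j, rfl⟩
  have hw : Module.finrank Fq (Submodule.span Fq (Set.range cols)) ≤ n - k + r := by
    rw [hspan]
    calc Module.finrank Fq (Submodule.span Fq (Set.range cols'))
        ≤ Fintype.card (Fin (n - k + r)) := finrank_range_le_card cols'
      _ = n - k + r := Fintype.card_fin _
  refine le_trans (Nat.sInf_le ?_) hw
  exact ⟨b, hbli, hbC, rfl⟩
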